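/- If a binary word f has a 2-tilde-error overlap of shift r realized by two replacements (R_i, R_j) with i < j, and the word β = pre_r(f) · R_j(f) contains f as a factor, then r is even, j − i = r/2, and f[i .. i + r/2 − 1] = f[j .. j + r/2 − 1]. -/

import Mathlib

/-- One tilde edit step: a single-bit replacement or a swap of two adjacent distinct symbols. -/
def tildeStep (u v : List Bool) : Prop :=
  (∃ i, i < u.length ∧ v = u.set i (!(u.getD i false))) ∨
  (∃ i, i + 1 < u.length ∧ u.getD i false ≠ u.getD (i+1) false ∧
    v = (u.set i (u.getD (i+1) false)).set (i+1) (u.getD i false))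

/-- A chain of `d` tilde steps from `u` to `v`. -/
def tildeChain : ℕ → List Bool → List Bool → Prop
  | 0, u, v => u = v
  | d+1, u, v => ∃ w, tildeStep u w ∧ tildeChain d w v

/-- The tilde-distance: minimum number of replacements and adjacent swaps. -/
noncomputable def tildeDist (u v : List Bool) : ℕ :=
  sInf {d | tildeChain d u v}

/-- `f` occurs as a contiguous factor of `w`. -/
def isFactor (f w : List Bool) : Prop := ∃ s t, w = s ++ f ++ t

/-- `w` is `f`-free. -/
def fFree (f w : List Bool) : Prop := ¬ isFactor f w

/-- A chain of `d` tilde steps from `u` to `v` all of whose intermediate words are `f`-free. -/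
def freeTildeChain (f : List Bool) : ℕ → List Bool → List Bool → Prop
  | 0, u, v => u = v
  | d+1, u, v => ∃ w, tildeStep u w ∧ fFree f w ∧ freeTildeChain f d w v

/-- `f` is tilde-isometric. -/
def tildeIsometric (f : List Bool) : Prop :=
  ∀ u v : List Bool, u.length = v.length → f.length ≤ u.length →
    fFree f u → fFree f v → freeTildeChain f (tildeDist u v) u v

/-- Replacement at (0-indexed) position `i`. -/
def repl (w : List Bool) (i : ℕ) : List Bool := w.set i (!(w.getD i false))

/-- Swap of positions `i` and `i+1` (0-indexed). -/
def swap (w : List Bool) (i : ℕ) : List Bool :=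
  (w.set i (w.getD (i+1) false)).set (i+1) (w.getD i false)

/-- Hamming distance between equal-length binary words. -/
def hammingDistL (u v : List Bool) : ℕ :=
  ((List.range u.length).filter (fun i => u.getD i false != v.getD i false)).length

/-- One Hamming edit step: a single-bit replacement. -/
def hammStep (u v : List Bool) : Prop :=
  ∃ i, i < u.length ∧ v = u.set i (!(u.getD i false))

/-- A chain of `d` Hamming steps from `u` to `v`, all intermediate words `f`-free. -/
def freeHammChain (f : List Bool) : ℕ → List Bool → List Bool → Prop
  | 0, u, v => u = v
  | d+1, u, v => ∃ w, hammStep u w ∧ fFree f w ∧ freeHammChain f d w v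

/-- `f` is Hamming-isometric. -/
def hammIsometric (f : List Bool) : Prop :=
  ∀ u v : List Bool, u.length = v.length → f.length ≤ u.length →
    fFree f u → fFree f v → freeHammChain f (hammingDistL u v) u v


private lemma xkey17 : ∀ (a b c d w x y z : Bool), d = (a ^^ w) → d = (b ^^ x) →
    a = (c ^^ y) → b = (c ^^ z) → (w ^^ x) = (y ^^ z) := by decide

private lemma xh17 : ∀ (d a b w x : Bool), d = (b ^^ x) → a = ((b ^^ w) ^^ x) →
    d = (a ^^ w) := by decide

private lemma getD_repl17 (w : List Bool) (m k : ℕ) (hm : m < w.length) :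
    (repl w m).getD k false = ((w.getD k false) ^^ decide (k = m)) := by
  unfold repl
  by_cases hk : k < w.length
  · have hk' : k < (w.set m (!w.getD m false)).length := by simpa using hk
    rw [List.getD_eq_getElem _ _ hk', List.getD_eq_getElem _ _ hk]
    by_cases hkm : k = m
    · subst hkm
      rw [List.getElem_set_self]
      rw [List.getD_eq_getElem _ _ hk]
      simp
    · rw [List.getElem_set_ne (fun h => hkm h.symm)]
      simp [hkm]
  · have h1 : w.length ≤ k := Nat.le_of_not_lt hk
    rw [List.getD_eq_default _ _ (by simpa using h1), List.getD_eq_default _ _ h1]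
    have : ¬ (k = m) := by omega
    simp [this]

private lemma getD_take17 (w : List Bool) (m k : ℕ) (h1 : k < m) (h2 : k < w.length) :
    (w.take m).getD k false = w.getD k false := by
  have hk : k < (w.take m).length := by simp; omega
  rw [List.getD_eq_getElem _ _ hk, List.getD_eq_getElem _ _ h2, List.getElem_take]

private lemma getD_drop17 (w : List Bool) (m k : ℕ) (h : m + k < w.length) :
    (w.drop m).getD k false = w.getD (m + k) false := by
  have hk : k < (w.drop m).length := by simp; omega
  rw [List.getD_eq_getElem _ _ hk, List.getD_eq_getElem _ _ h, List.getElem_drop]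

theorem stmt17 (f : List Bool) (n r i j : ℕ) (hn : f.length = n)
    (hr0 : 0 < r) (hrn : r < n) (hij : i < j) (hj : j < n - r)
    (hov : f.drop r = repl (repl (f.take (n - r)) i) j)
    (hi : f.getD i false ≠ f.getD (i + r) false)
    (hjj : f.getD j false ≠ f.getD (j + r) false)
    (hocc : isFactor f (f.take r ++ repl f j)) :
    r % 2 = 0 ∧ j - i = r / 2 ∧
    (∀ t : ℕ, t < r / 2 → f.getD (i + t) false = f.getD (j + t) false) := by
  have hij' : i ≠ j := Nat.ne_of_lt hij
  have hin : i < n - r := lt_trans hij hj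
  -- (A) the overlap relation, pointwise
  have hA : ∀ k, k < n - r →
      f.getD (r + k) false = ((f.getD k false ^^ decide (k = i)) ^^ decide (k = j)) := by
    intro k hk
    have h1 : (f.drop r).getD k false = f.getD (r + k) false :=
      getD_drop17 f r k (by omega)
    have hlen : (f.take (n - r)).length = n - r := by
      simp [hn]
    have hii : i < (f.take (n - r)).length := by omega
    have hjj' : j < (repl (f.take (n - r)) i).length := by
      simp [repl, hlen]; omega
    rw [hov, getD_repl17 _ _ _ hjj', getD_repl17 _ _ _ hii,
      getD_take17 _ _ _ hk (by omega)] at h1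
    exact h1.symm
  obtain ⟨s, t, hβ⟩ := hocc
  set p := s.length with hpdef
  have hlt : (f.take r).length = r := by simp [hn]; omega
  have hlr : (repl f j).length = n := by simp [repl, hn]
  have hlens := congrArg List.length hβ
  simp only [List.length_append, hlt, hlr, hn] at hlens
  have hp : p ≤ r := by omega
  set q := r - p with hqdef
  have hpq : p + q = r := by omega
  -- pointwise value of β
  have βval1 : ∀ u, u < r → (f.take r ++ repl f j).getD u false = f.getD u false := by
    intro u hu
    rw [List.getD_append _ _ _ _ (by omega), getD_take17 _ _ _ hu (by omega)]
  have βval2 : ∀ u, r ≤ u → u < r + n →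
      (f.take r ++ repl f j).getD u false = ((f.getD (u - r) false) ^^ decide (u - r = j)) := by
    intro u hu hu2
    rw [List.getD_append_right _ _ _ _ (by omega), hlt,
      getD_repl17 _ _ _ (by simp [hn]; omega)]
  -- the occurrence, pointwise
  have occ : ∀ m, m < n → f.getD m false = (f.take r ++ repl f j).getD (p + m) false := by
    intro m hm
    rw [hβ, List.append_assoc, List.getD_append_right _ _ _ _ (by omega)]
    rw [show p + m - s.length = m from by omega, List.getD_append _ _ _ _ (by omega)]
  -- (E): near-period p with one defect at r+i
  have hE : ∀ u, p ≤ u → u < n →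
      f.getD (u - p) false = ((f.getD u false) ^^ decide (u = r + i)) := by
    intro u hpu hun
    have h1 := occ (u - p) (by omega)
    rw [show p + (u - p) = u from by omega] at h1
    by_cases hur : u < r
    · rw [βval1 u hur] at h1
      rw [show decide (u = r + i) = false from decide_eq_false (by omega), h1]
      simp
    · push_neg at hur
      rw [βval2 u hur (by omega)] at h1
      have h2 := hA (u - r) (by omega)
      rw [show r + (u - r) = u from by omega,
        show decide (u - r = i) = decide (u = r + i) from by
          simp only [decide_eq_decide]; omega] at h2
      exact xh17 _ _ _ _ _ h1 h2
  -- (B): near-period q with one defect at j+q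
  have hB : ∀ u, q ≤ u → u < n →
      f.getD u false = ((f.getD (u - q) false) ^^ decide (u = j + q)) := by
    intro u hqu hun
    have h1 := occ u hun
    rw [βval2 (p + u) (by omega) (by omega),
      show p + u - r = u - q from by omega,
      show decide (u - q = j) = decide (u = j + q) from by
        simp only [decide_eq_decide]; omega] at h1
    exact h1
  -- key indicator identity
  have key : ∀ u, r ≤ u → u < n →
      ((decide (u = r + i)) ^^ (decide (u = r + j))) =
        ((decide (u = j + q)) ^^ (decide (u = q + (r + i)))) := by
    intro u hru hun
    have hE1 := hE u (by omega) hun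
    have hB1 := hB (u - p) (by omega) (by omega)
    rw [show u - p - q = u - r from by omega,
      show decide (u - p = j + q) = decide (u = r + j) from by
        simp only [decide_eq_decide]; omega] at hB1
    have hB2 := hB u (by omega) hun
    have hE2 := hE (u - q) (by omega) (by omega)
    rw [show u - q - p = u - r from by omega,
      show decide (u - q = r + i) = decide (u = q + (r + i)) from by
        simp only [decide_eq_decide]; omega] at hE2
    exact xkey17 _ _ _ _ _ _ _ _ hE1 hB1 hB2 hE2
  have hk1 := key (r + j) (by omega) (by omega)
  have hk2 := key (r + i) (by omega) (by omega)
  have hq0 : q ≠ 0 := by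
    intro h0
    have e1 : ¬ (r + j = r + i) := by omega
    have e2 : ¬ (r + j = j + q) := by omega
    have e3 : ¬ (r + j = q + (r + i)) := by omega
    simp [e1, e2, e3] at hk1
    omega
  have hrq : r ≠ q := by
    intro h0
    have e1 : ¬ (r + i = r + j) := by omega
    have e2 : ¬ (r + i = j + q) := by omega
    have e3 : ¬ (r + i = q + (r + i)) := by omega
    simp [e1, e2, e3] at hk2
    simp [hij', hq0] at hk2
  have hjqi : j = q + i := by
    have e1 : ¬ (r + j = r + i) := by omega
    have e2 : ¬ (r + j = j + q) := by omega
    by_contra hne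
    have e3 : ¬ (r + j = q + (r + i)) := by omega
    rw [decide_eq_false e1, decide_eq_true (rfl : r + j = r + j), decide_eq_false e2,
      decide_eq_false e3] at hk1
    simp at hk1
  have hr2q : r = 2 * q := by
    have e1 : ¬ (r + i = r + j) := by omega
    have e3 : ¬ (r + i = q + (r + i)) := by omega
    by_contra hne
    have e2 : ¬ (r + i = j + q) := by omega
    rw [decide_eq_true (rfl : r + i = r + i), decide_eq_false e1, decide_eq_false e2,
      decide_eq_false e3] at hk2
    simp at hk2
  refine ⟨by omega, by omega, ?_⟩
  intro t ht
  have htq : t < q := by omega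
  have h1 := hB (j + t) (by omega) (by omega)
  rw [show j + t - q = i + t from by omega,
    show decide (j + t = j + q) = false from decide_eq_false (by omega)] at h1
  rw [h1]
  simp
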